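/- For all n ≥ 1, the number of non-crossing permutations of {1,1,...,n,n} avoiding both the pattern 122 and the pattern 231 equals 2^{n-1}. -/

import Mathlib

/-- A permutation of the multiset {1,1,2,2,...,n,n}, encoded as a function
`Fin (2*n) → Fin n` where the value `v : Fin n` represents `v+1`:
every value appears exactly twice. -/
def IsMultisetPerm {n : ℕ} (π : Fin (2*n) → Fin n) : Prop :=
  ∀ v : Fin n, (Finset.univ.filter fun i => π i = v).card = 2

/-- Non-nesting: no indices i<j<k<l with π_i=π_l, π_j=π_k, π_i≠π_j. -/
def NonNesting {n : ℕ} (π : Fin (2*n) → Fin n) : Prop :=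
  ¬ ∃ i j k l : Fin (2*n), i < j ∧ j < k ∧ k < l ∧
      π i = π l ∧ π j = π k ∧ π i ≠ π j

/-- Non-crossing: no indices i<j<k<l with π_i=π_k, π_j=π_l, π_i≠π_j. -/
def NonCrossing {n : ℕ} (π : Fin (2*n) → Fin n) : Prop :=
  ¬ ∃ i j k l : Fin (2*n), i < j ∧ j < k ∧ k < l ∧
      π i = π k ∧ π j = π l ∧ π i ≠ π j

/-- Avoiding the pattern 231: no i<j<k with π_k < π_i < π_j. -/
def Avoids231 {n : ℕ} (π : Fin (2*n) → Fin n) : Prop :=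
  ¬ ∃ i j k : Fin (2*n), i < j ∧ j < k ∧ π k < π i ∧ π i < π j

/-- Avoiding 122: no i<j<k with π_i < π_j = π_k. -/
def Avoids122 {n : ℕ} (π : Fin (2*n) → Fin n) : Prop :=
  ¬ ∃ i j k : Fin (2*n), i < j ∧ j < k ∧ π i < π j ∧ π j = π k

/-- The first entry is the value 1 (encoded as `0 : Fin n`). -/
def FirstIsOne {n : ℕ} (π : Fin (2*n) → Fin n) : Prop :=
  ∃ h : 0 < n, π ⟨0, by omega⟩ = ⟨0, h⟩

/-- The last entry is the value n (encoded as `n-1 : Fin n`). -/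
def LastIsMax {n : ℕ} (π : Fin (2*n) → Fin n) : Prop :=
  ∃ h : 0 < n, π ⟨2*n - 1, by omega⟩ = ⟨n - 1, by omega⟩

namespace Stmt15
def Good {n : ℕ} (π : Fin (2*n) → Fin n) : Prop :=
  IsMultisetPerm π ∧ NonCrossing π ∧ Avoids122 π ∧ Avoids231 π
def A (n : ℕ) := {π : Fin (2*n) → Fin n // Good π}
def topv (n : ℕ) : Fin (n+1) := ⟨n, by omega⟩
lemma lt_topv {n : ℕ} {v : Fin (n+1)} (h : v ≠ topv n) : v < topv n := by
  have h1 := v.isLt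
  have h2 : v.val ≠ n := fun hh => h (Fin.ext hh)
  simp only [Fin.lt_def, topv]; omega
lemma le_topv {n : ℕ} (v : Fin (n+1)) : v ≤ topv n := by
  have := v.isLt
  simp only [Fin.le_def, topv]
  omega

lemma two_pos {m : ℕ} {π : Fin (2*m) → Fin m} (h : IsMultisetPerm π) (v : Fin m) :
    ∃ p q : Fin (2*m), p < q ∧ π p = v ∧ π q = v ∧ ∀ r, π r = v → r = p ∨ r = q := by
  obtain ⟨a, b, hab, hset⟩ := Finset.card_eq_two.1 (h v)
  have ha : π a = v := by
    have : a ∈ Finset.univ.filter fun i => π i = v := by rw [hset]; simp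
    simpa using this
  have hb : π b = v := by
    have : b ∈ Finset.univ.filter fun i => π i = v := by rw [hset]; simp
    simpa using this
  have huniq : ∀ r, π r = v → r = a ∨ r = b := by
    intro r hr
    have : r ∈ Finset.univ.filter fun i => π i = v := by simp [hr]
    rw [hset] at this; simpa using this
  rcases lt_or_gt_of_ne hab with hlt | hgt
  · exact ⟨a, b, hlt, ha, hb, huniq⟩
  · exact ⟨b, a, hgt, hb, ha, fun r hr => (huniq r hr).symm⟩

-- NEW PART
variable {n : ℕ}

lemma first_top {π : Fin (2*(n+1)) → Fin (n+1)} (h : Good π) :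
    π ⟨0, by omega⟩ = topv n := by
  obtain ⟨p, q, hpq, hp, hq, huniq⟩ := two_pos h.1 (topv n)
  by_contra h0
  have hlt : π ⟨0, by omega⟩ < π p := hp ▸ lt_topv h0
  have h0p : (⟨0, by omega⟩ : Fin (2*(n+1))) < p := by
    have : p ≠ ⟨0, by omega⟩ := fun he => h0 (he ▸ hp)
    have hne : p.val ≠ 0 := Fin.val_ne_of_ne this
    simp only [Fin.lt_def]
    show 0 < p.val
    omega
  exact h.2.2.1 ⟨_, p, q, h0p, hpq, hlt, hp.trans hq.symm⟩

/-- The two positions of the top value, with uniqueness. -/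
lemma top_struct {π : Fin (2*(n+1)) → Fin (n+1)} (h : Good π) :
    ∃ t : Fin (2*(n+1)), 0 < t.val ∧ π t = topv n ∧
      (∀ r, π r = topv n → r.val = 0 ∨ r = t) := by
  obtain ⟨p, q, hpq, hp, hq, huniq⟩ := two_pos h.1 (topv n)
  have h0 := first_top h
  have hp0 : p.val = 0 := by
    rcases huniq _ h0 with he | he
    · rw [← he]
    · exfalso
      have hq0 : q.val = 0 := by rw [← he]
      simp only [Fin.lt_def] at hpq; omega
  have hq0 : 0 < q.val := by simp only [Fin.lt_def, hp0] at hpq; omega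
  refine ⟨q, hq0, hq, fun r hr => ?_⟩
  rcases huniq r hr with he | he
  · left; rw [he, hp0]
  · right; exact he

lemma second_top {π : Fin (2*(n+1)) → Fin (n+1)} (h : Good π) (hn : 1 ≤ n) :
    π ⟨1, by omega⟩ = topv n ∨ π ⟨2*n+1, by omega⟩ = topv n := by
  obtain ⟨t, ht0, htv, huniq⟩ := top_struct h
  by_contra hc
  push_neg at hc
  obtain ⟨h1, hm⟩ := hc
  have ht1 : t.val ≠ 1 := fun he => h1 (by rwa [show (⟨1, by omega⟩ : Fin (2*(n+1))) = t from Fin.ext he.symm])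
  have htm : t.val ≠ 2*n+1 := fun he => hm (by rwa [show (⟨2*n+1, by omega⟩ : Fin (2*(n+1))) = t from Fin.ext he.symm])
  have htlt := t.isLt
  -- so 1 < t.val < 2*n+1
  set m : Fin (2*(n+1)) := ⟨2*n+1, by omega⟩ with hm_def
  set one : Fin (2*(n+1)) := ⟨1, by omega⟩ with hone_def
  have h0 := first_top h
  set u := π one with hu
  set w := π m with hw
  have hu_lt : u < topv n := lt_topv h1
  have hw_lt : w < topv n := lt_topv hm
  rcases lt_trichotomy w u with hlt | heq | hgt
  · -- 231 pattern (one, t, m)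
    exact h.2.2.2 ⟨one, t, m, by simp only [Fin.lt_def, hone_def]; omega,
      by simp only [Fin.lt_def, hm_def]; omega, hlt, by rw [htv]; exact hu_lt⟩
  · -- noncrossing (0, one, t, m)
    exact h.2.1 ⟨⟨0, by omega⟩, one, t, m, by simp only [Fin.lt_def, hone_def]; omega,
      by simp only [Fin.lt_def, hone_def]; omega, by simp only [Fin.lt_def, hm_def]; omega,
      by rw [h0, htv], heq.symm, by rw [h0]; exact fun he => absurd he.symm (ne_of_lt hu_lt)⟩
  · -- 122 pattern: w appears twice
    obtain ⟨p, q, hpq, hp, hq, huw⟩ := two_pos h.1 w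
    have hp0 : p.val ≠ 0 := by
      intro he
      have : p = ⟨0, by omega⟩ := Fin.ext he
      rw [this, h0] at hp
      exact absurd hp.symm (ne_of_lt hw_lt)
    have hp1 : p.val ≠ 1 := by
      intro he
      have : p = one := Fin.ext he
      rw [this, ← hu] at hp
      exact absurd hp (ne_of_lt hgt)
    -- m is one of p, q
    rcases huw m rfl with he | he
    · -- m = p, then q > m impossible
      have hq2 := q.isLt
      have := congrArg Fin.val he
      simp only [Fin.lt_def] at hpq
      simp only [hm_def] at this
      omega
    · -- m = q : 122 with (one, p, q)
      have hpm : p.val < 2*n+1 := by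
        have := congrArg Fin.val he
        simp only [Fin.lt_def] at hpq
        simp only [hm_def] at this
        omega
      exact h.2.2.1 ⟨one, p, q, by simp only [Fin.lt_def, hone_def]; omega, hpq,
        by rw [hp, ← hu]; exact hgt, hp.trans hq.symm⟩

section Transfer
variable {π : Fin (2*(n+1)) → Fin (n+1)} {σ : Fin (2*n) → Fin n}
  {e : Fin (2*n) → Fin (2*(n+1))}

/-- Patterns pass to subwords. -/
lemma transfer (he : StrictMono e)
    (heq : ∀ i j, σ i = σ j ↔ π (e i) = π (e j))
    (hlt : ∀ i j, σ i < σ j ↔ π (e i) < π (e j)) :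
    (NonCrossing π → NonCrossing σ) ∧ (Avoids122 π → Avoids122 σ) ∧
      (Avoids231 π → Avoids231 σ) := by
  refine ⟨fun h hc => ?_, fun h hc => ?_, fun h hc => ?_⟩
  · obtain ⟨i, j, k, l, h1, h2, h3, h4, h5, h6⟩ := hc
    exact h ⟨e i, e j, e k, e l, he h1, he h2, he h3, (heq i k).1 h4, (heq j l).1 h5,
      fun hh => h6 ((heq i j).2 hh)⟩
  · obtain ⟨i, j, k, h1, h2, h3, h4⟩ := hc
    exact h ⟨e i, e j, e k, he h1, he h2, (hlt i j).1 h3, (heq j k).1 h4⟩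
  · obtain ⟨i, j, k, h1, h2, h3, h4⟩ := hc
    exact h ⟨e i, e j, e k, he h1, he h2, (hlt k i).1 h3, (hlt i j).1 h4⟩

/-- Patterns extend: badness in the big word descends to the small word. -/
lemma descend {t1 : Fin (2*(n+1))} (he : StrictMono e) (ht1 : 0 < t1.val)
    (hπ0 : π ⟨0, by omega⟩ = topv n) (hπt : π t1 = topv n)
    (htop : ∀ p, π p = topv n → p.val = 0 ∨ p = t1)
    (himg : ∀ p, π p ≠ topv n → ∃ i, p = e i)
    (hval : ∀ i, π (e i) = Fin.castSucc (σ i))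
    (H : ∀ i k : Fin (2*(n+1)), i < t1 → t1 < k → π i = topv n)
    (H2 : ∀ j l : Fin (2*(n+1)), 0 < j.val → j < t1 → t1 < l → False)
    (hσ : NonCrossing σ ∧ Avoids122 σ ∧ Avoids231 σ) :
    NonCrossing π ∧ Avoids122 π ∧ Avoids231 π := by
  have hrl : ∀ i j, i < j → ∀ (hi : π i ≠ topv n) (hj : π j ≠ topv n),
      ∀ i' j', i = e i' → j = e j' → i' < j' := by
    intro i j hij hi hj i' j' hi' hj'
    rw [hi', hj'] at hij
    exact he.lt_iff_lt.1 hij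
  have heq : ∀ i' j', π (e i') = π (e j') → σ i' = σ j' := by
    intro i' j' hh
    rw [hval i', hval j'] at hh
    exact Fin.castSucc_inj.1 hh
  have hlt2 : ∀ i' j', π (e i') < π (e j') → σ i' < σ j' := by
    intro i' j' hh
    rw [hval i', hval j'] at hh
    exact (Fin.castSucc_lt_castSucc_iff).1 hh
  refine ⟨fun hc => ?_, fun hc => ?_, fun hc => ?_⟩
  · obtain ⟨i, j, k, l, h1, h2, h3, h4, h5, h6⟩ := hc
    by_cases hi : π i = topv n
    · have hk : π k = topv n := h4 ▸ hi
      rcases htop i hi with hi0 | hit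
      · rcases htop k hk with hk0 | hkt
        · simp only [Fin.lt_def] at h1 h2; omega
        · exact H2 j l (by simp only [Fin.lt_def] at h1; omega) (hkt ▸ h2) (hkt ▸ h3)
      · rcases htop k hk with hk0 | hkt
        · have := h1.trans h2
          simp only [Fin.lt_def] at this; omega
        · rw [hit] at h1; rw [hkt] at h2; exact absurd (h1.trans h2) (lt_irrefl t1)
    · by_cases hj : π j = topv n
      · rcases htop j hj with hj0 | hjt
        · simp only [Fin.lt_def] at h1; omega
        · have hl : π l = topv n := h5 ▸ hj
          rcases htop l hl with hl0 | hlt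
          · have := h2.trans h3
            simp only [Fin.lt_def] at this; omega
          · rw [hjt] at h2; rw [hlt] at h3; exact absurd (h2.trans h3) (lt_irrefl t1)
      · have hk : π k ≠ topv n := h4 ▸ hi
        have hl : π l ≠ topv n := h5 ▸ hj
        obtain ⟨i', hi'⟩ := himg i hi
        obtain ⟨j', hj'⟩ := himg j hj
        obtain ⟨k', hk'⟩ := himg k hk
        obtain ⟨l', hl'⟩ := himg l hl
        refine hσ.1 ⟨i', j', k', l', hrl i j h1 hi hj i' j' hi' hj',
          hrl j k h2 hj hk j' k' hj' hk', hrl k l h3 hk hl k' l' hk' hl',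
          heq i' k' (by rw [← hi', ← hk']; exact h4),
          heq j' l' (by rw [← hj', ← hl']; exact h5),
          fun hh => h6 ?_⟩
        rw [hi', hj', hval i', hval j', hh]
  · obtain ⟨i, j, k, h1, h2, h3, h4⟩ := hc
    by_cases hj : π j = topv n
    · rcases htop j hj with hj0 | hjt
      · simp only [Fin.lt_def] at h1; omega
      · have hk : π k = topv n := h4 ▸ hj
        rcases htop k hk with hk0 | hkt
        · have := h2
          simp only [Fin.lt_def] at this
          have := ht1
          omega
        · rw [hjt, hkt] at h2; exact absurd h2 (lt_irrefl t1)
    · have hi : π i ≠ topv n := fun hh => absurd h3 (by rw [hh]; exact not_lt.2 (le_topv _))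
      have hk : π k ≠ topv n := h4 ▸ hj
      obtain ⟨i', hi'⟩ := himg i hi
      obtain ⟨j', hj'⟩ := himg j hj
      obtain ⟨k', hk'⟩ := himg k hk
      exact hσ.2.1 ⟨i', j', k', hrl i j h1 hi hj i' j' hi' hj',
        hrl j k h2 hj hk j' k' hj' hk',
        hlt2 i' j' (by rw [← hi', ← hj']; exact h3),
        heq j' k' (by rw [← hj', ← hk']; exact h4)⟩
  · obtain ⟨i, j, k, h1, h2, h3, h4⟩ := hc
    by_cases hj : π j = topv n
    · rcases htop j hj with hj0 | hjt
      · simp only [Fin.lt_def] at h1; omega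
      · have hi : π i = topv n := H i k (hjt ▸ h1) (hjt ▸ h2)
        rw [hi, hj] at h4; exact absurd h4 (lt_irrefl _)
    · have hi : π i ≠ topv n := fun hh => absurd h4 (by rw [hh]; exact not_lt.2 (le_topv _))
      have hk : π k ≠ topv n := fun hh => absurd h3 (by rw [hh]; exact not_lt.2 (le_topv _))
      obtain ⟨i', hi'⟩ := himg i hi
      obtain ⟨j', hj'⟩ := himg j hj
      obtain ⟨k', hk'⟩ := himg k hk
      exact hσ.2.2 ⟨i', j', k', hrl i j h1 hi hj i' j' hi' hj',
        hrl j k h2 hj hk j' k' hj' hk',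
        hlt2 k' i' (by rw [← hk', ← hi']; exact h3),
        hlt2 i' j' (by rw [← hi', ← hj']; exact h4)⟩

lemma filter_img (he : Function.Injective e)
    (himg : ∀ p, π p ≠ topv n → ∃ i, p = e i)
    (hval : ∀ i, π (e i) = Fin.castSucc (σ i)) (v' : Fin n) :
    (Finset.univ.filter fun p => π p = Fin.castSucc v').card =
      (Finset.univ.filter fun i => σ i = v').card := by
  have hne : Fin.castSucc v' ≠ topv n := by
    have := v'.isLt
    simp only [Fin.ne_iff_vne, Fin.castSucc, topv, Fin.castAdd, Fin.castLE]
    omega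
  have hset : (Finset.univ.filter fun p => π p = Fin.castSucc v') =
      (Finset.univ.filter fun i => σ i = v').image e := by
    ext p
    simp only [Finset.mem_filter, Finset.mem_univ, true_and, Finset.mem_image]
    constructor
    · intro hp
      obtain ⟨i, rfl⟩ := himg p (by rw [hp]; exact hne)
      refine ⟨i, ?_, rfl⟩
      have := hval i
      rw [hp] at this
      exact Fin.castSucc_inj.1 this.symm
    · rintro ⟨i, hi, rfl⟩
      rw [hval i, hi]
  rw [hset, Finset.card_image_of_injective _ he]

lemma filter_top {t1 : Fin (2*(n+1))} (ht1 : 0 < t1.val)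
    (hπ0 : π ⟨0, by omega⟩ = topv n) (hπt : π t1 = topv n)
    (htop : ∀ p, π p = topv n → p.val = 0 ∨ p = t1) :
    (Finset.univ.filter fun p => π p = topv n).card = 2 := by
  have hset : (Finset.univ.filter fun p => π p = topv n) = {⟨0, by omega⟩, t1} := by
    ext p
    simp only [Finset.mem_filter, Finset.mem_univ, true_and, Finset.mem_insert,
      Finset.mem_singleton]
    constructor
    · intro hp
      rcases htop p hp with h | h
      · exact Or.inl (Fin.ext h)
      · exact Or.inr h
    · rintro (rfl | rfl)
      · exact hπ0
      · exact hπt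
  rw [hset, Finset.card_pair (by simp only [Fin.ne_iff_vne]; omega)]

lemma msp_up {t1 : Fin (2*(n+1))} (he : Function.Injective e) (ht1 : 0 < t1.val)
    (hπ0 : π ⟨0, by omega⟩ = topv n) (hπt : π t1 = topv n)
    (htop : ∀ p, π p = topv n → p.val = 0 ∨ p = t1)
    (himg : ∀ p, π p ≠ topv n → ∃ i, p = e i)
    (hval : ∀ i, π (e i) = Fin.castSucc (σ i))
    (hσ : IsMultisetPerm σ) : IsMultisetPerm π := by
  intro v
  by_cases hv : v = topv n
  · rw [hv]; exact filter_top ht1 hπ0 hπt htop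
  · have hv' : v.val < n := by
      have := v.isLt
      have : v.val ≠ n := fun hh => hv (Fin.ext hh)
      omega
    have : v = Fin.castSucc ⟨v.val, hv'⟩ := Fin.ext rfl
    rw [this, filter_img he himg hval]
    exact hσ _

lemma msp_down (he : Function.Injective e)
    (himg : ∀ p, π p ≠ topv n → ∃ i, p = e i)
    (hval : ∀ i, π (e i) = Fin.castSucc (σ i))
    (hπ : IsMultisetPerm π) : IsMultisetPerm σ := by
  intro v'
  rw [← filter_img he himg hval]
  exact hπ _

end Transfer
section Build
variable {n : ℕ}

def off (b : Bool) : ℕ := if b then 2 else 1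

lemma off_le (b : Bool) : off b ≤ 2 := by cases b <;> simp [off]
lemma off_pos (b : Bool) : 1 ≤ off b := by cases b <;> simp [off]

def emb (n : ℕ) (b : Bool) (i : Fin (2*n)) : Fin (2*(n+1)) :=
  ⟨i.val + off b, by have := i.isLt; have := off_le b; omega⟩

lemma emb_strictMono (b : Bool) : StrictMono (emb n b) := by
  intro i j hij
  simp only [emb, Fin.lt_def] at *
  omega

def t1pos (n : ℕ) (b : Bool) : Fin (2*(n+1)) :=
  if b then ⟨1, by omega⟩ else ⟨2*n+1, by omega⟩

lemma t1pos_val (b : Bool) : (t1pos n b).val = if b then 1 else 2*n+1 := by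
  cases b <;> simp [t1pos] <;> exact Nat.mod_eq_of_lt (by omega)

lemma t1pos_pos (b : Bool) : 0 < (t1pos n b).val := by
  rw [t1pos_val]; cases b <;> simp

lemma emb_ne (b : Bool) (i : Fin (2*n)) :
    (emb n b i).val ≠ 0 ∧ emb n b i ≠ t1pos n b := by
  have hi := i.isLt
  have h1 := off_pos b
  constructor
  · simp only [emb]; omega
  · simp only [Fin.ne_iff_vne, emb, t1pos_val]
    cases b <;> simp [off] <;> omega

lemma mem_emb (b : Bool) (p : Fin (2*(n+1))) (h0 : p.val ≠ 0) (h1 : p ≠ t1pos n b) :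
    ∃ i, p = emb n b i := by
  have hp := p.isLt
  have h1' : p.val ≠ (t1pos n b).val := fun hh => h1 (Fin.ext hh)
  rw [t1pos_val] at h1'
  refine ⟨⟨p.val - off b, by cases b <;> simp only [off, ↓reduceIte, Bool.false_eq_true] at * <;> omega⟩, ?_⟩
  simp only [emb, Fin.ext_iff]
  cases b <;> simp only [off, ↓reduceIte, Bool.false_eq_true, Fin.val_mk] at * <;> omega

def build (n : ℕ) (b : Bool) (σ : Fin (2*n) → Fin n) (p : Fin (2*(n+1))) : Fin (n+1) :=
  if h : p.val = 0 ∨ p = t1pos n b then topv n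
  else Fin.castSucc (σ ⟨p.val - off b, by
    push_neg at h
    have hp := p.isLt
    have h1' : p.val ≠ (t1pos n b).val := fun hh => h.2 (Fin.ext hh)
    rw [t1pos_val] at h1'
    cases b <;> simp only [off, ↓reduceIte, Bool.false_eq_true] at * <;> omega⟩)

lemma build_zero (b : Bool) (σ : Fin (2*n) → Fin n) :
    build n b σ ⟨0, by omega⟩ = topv n := by
  simp [build]

lemma build_t1 (b : Bool) (σ : Fin (2*n) → Fin n) :
    build n b σ (t1pos n b) = topv n := by
  simp [build]

lemma build_top (b : Bool) (σ : Fin (2*n) → Fin n) (p : Fin (2*(n+1)))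
    (h : build n b σ p = topv n) : p.val = 0 ∨ p = t1pos n b := by
  by_contra hc
  rw [build, dif_neg hc] at h
  have ht : topv n = Fin.last n := rfl
  rw [ht] at h
  exact absurd h (ne_of_lt (Fin.castSucc_lt_last _))

lemma build_emb (b : Bool) (σ : Fin (2*n) → Fin n) (i : Fin (2*n)) :
    build n b σ (emb n b i) = Fin.castSucc (σ i) := by
  obtain ⟨h0, h1⟩ := emb_ne b i
  rw [build, dif_neg (by push_neg; exact ⟨h0, h1⟩)]
  have hv : (emb n b i).val - off b = i.val := by simp [emb]
  exact congrArg Fin.castSucc (congrArg σ (Fin.ext hv))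

lemma H_prop (b : Bool) (σ : Fin (2*n) → Fin n) :
    ∀ i k : Fin (2*(n+1)), i < t1pos n b → t1pos n b < k → build n b σ i = topv n := by
  intro i k hi hk
  simp only [Fin.lt_def, t1pos_val] at hi hk
  cases b
  · simp at hi hk
    have := k.isLt
    omega
  · simp only [↓reduceIte, Bool.false_eq_true] at hi hk
    have : i.val = 0 := by omega
    have : i = ⟨0, by omega⟩ := Fin.ext this
    rw [this, build_zero]

lemma H2_prop (b : Bool) :
    ∀ j l : Fin (2*(n+1)), 0 < j.val → j < t1pos n b → t1pos n b < l → False := by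
  intro j l hj hjl hl
  simp only [Fin.lt_def, t1pos_val] at hjl hl
  have := l.isLt
  cases b <;> simp only [↓reduceIte, Bool.false_eq_true] at hjl hl <;> omega

end Build
section Main
variable {n : ℕ}

lemma good_build (b : Bool) {σ : Fin (2*n) → Fin n} (hσ : Good σ) :
    Good (build n b σ) := by
  have he := emb_strictMono (n := n) b
  have himg : ∀ p, build n b σ p ≠ topv n → ∃ i, p = emb n b i := by
    intro p hp
    refine mem_emb b p ?_ ?_
    · intro hh
      exact hp (by rw [show p = ⟨0, by omega⟩ from Fin.ext hh]; exact build_zero b σ)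
    · intro hh
      exact hp (by rw [hh]; exact build_t1 b σ)
  have hval := build_emb b σ
  obtain ⟨h1, h2, h3⟩ := descend (π := build n b σ) he (t1pos_pos b) (build_zero b σ)
    (build_t1 b σ) (build_top b σ) himg hval (H_prop b σ) (H2_prop b)
    ⟨hσ.2.1, hσ.2.2.1, hσ.2.2.2⟩
  exact ⟨msp_up he.injective (t1pos_pos b) (build_zero b σ) (build_t1 b σ)
    (build_top b σ) himg hval hσ.1, h1, h2, h3⟩

lemma build_surj (hn : 1 ≤ n) {π : Fin (2*(n+1)) → Fin (n+1)} (h : Good π) :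
    ∃ b σ, Good σ ∧ build n b σ = π := by
  have h0 := first_top h
  obtain ⟨t, ht0, htv, huniq⟩ := top_struct h
  set b : Bool := decide (π ⟨1, by omega⟩ = topv n) with hb
  have htb : t = t1pos n b := by
    by_cases h1 : π ⟨1, by omega⟩ = topv n
    · rcases huniq _ h1 with hc | hc
      · simp at hc
      · have : b = true := by rw [hb]; exact decide_eq_true h1
        rw [this, ← hc]
        rfl
    · have hbf : b = false := by rw [hb]; exact decide_eq_false h1
      rcases second_top h hn with hc | hc
      · exact absurd hc h1
      · rcases huniq _ hc with hd | hd
        · simp at hd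
        · rw [hbf, ← hd]
          rfl
  rw [htb] at htv huniq
  have htop : ∀ p, π p = topv n → p.val = 0 ∨ p = t1pos n b := huniq
  have himg : ∀ p, π p ≠ topv n → ∃ i, p = emb n b i := by
    intro p hp
    refine mem_emb b p (fun hh => hp ?_) (fun hh => hp ?_)
    · rw [show p = ⟨0, by omega⟩ from Fin.ext hh]; exact h0
    · rw [hh]; exact htv
  have hnt : ∀ i, π (emb n b i) ≠ topv n := by
    intro i hh
    rcases htop _ hh with hc | hc
    · exact (emb_ne b i).1 hc
    · exact (emb_ne b i).2 hc
  have hlt' : ∀ i, (π (emb n b i)).val < n := by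
    intro i
    have := lt_topv (hnt i)
    simpa [Fin.lt_def, topv] using this
  set σ : Fin (2*n) → Fin n := fun i => ⟨(π (emb n b i)).val, hlt' i⟩ with hσdef
  have hval : ∀ i, π (emb n b i) = Fin.castSucc (σ i) := fun i => Fin.ext rfl
  have heq : ∀ i j, σ i = σ j ↔ π (emb n b i) = π (emb n b j) := by
    intro i j
    simp only [Fin.ext_iff, hσdef]
  have hlt2 : ∀ i j, σ i < σ j ↔ π (emb n b i) < π (emb n b j) := by
    intro i j
    simp only [Fin.lt_def, hσdef]
  obtain ⟨t1, t2, t3⟩ := transfer (emb_strictMono b) heq hlt2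
  refine ⟨b, σ, ⟨msp_down (emb_strictMono b).injective himg hval h.1,
    t1 h.2.1, t2 h.2.2.1, t3 h.2.2.2⟩, ?_⟩
  funext p
  by_cases hp : p.val = 0 ∨ p = t1pos n b
  · rw [build, dif_pos hp]
    rcases hp with hc | hc
    · rw [show p = ⟨0, by omega⟩ from Fin.ext hc, h0]
    · rw [hc, htv]
  · push_neg at hp
    obtain ⟨i, rfl⟩ := mem_emb b p hp.1 hp.2
    rw [build_emb, ← hval]

def F (n : ℕ) : Bool × A n → A (n+1) :=
  fun x => ⟨build n x.1 x.2.1, good_build x.1 x.2.2⟩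

lemma F_bijective (hn : 1 ≤ n) : Function.Bijective (F n) := by
  constructor
  · rintro ⟨b, σ, hσ⟩ ⟨b', σ', hσ'⟩ hFF
    have hbb : build n b σ = build n b' σ' := congrArg Subtype.val hFF
    have htrue : ∀ τ : Fin (2*n) → Fin n, build n true τ ⟨1, by omega⟩ = topv n := by
      intro τ
      have ht : (⟨1, by omega⟩ : Fin (2*(n+1))) = t1pos n true := rfl
      rw [ht]
      exact build_t1 true τ
    have hfalse : ∀ τ : Fin (2*n) → Fin n, build n false τ ⟨1, by omega⟩ ≠ topv n := by
      intro τ hh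
      rcases build_top false τ _ hh with hc | hc
      · simp at hc
      · have := congrArg Fin.val hc
        rw [t1pos_val] at this
        simp at this
        omega
    have hb : b = b' := by
      have hv := congrFun hbb ⟨1, by omega⟩
      cases b <;> cases b'
      · rfl
      · exact absurd (hv.trans (htrue σ')) (hfalse σ)
      · exact absurd ((hv.symm).trans (htrue σ)) (hfalse σ')
      · rfl
    subst hb
    have hσσ : σ = σ' := by
      funext i
      have hv := congrFun hbb (emb n b i)
      rw [build_emb, build_emb] at hv
      exact Fin.castSucc_inj.1 hv
    subst hσσ
    rfl
  · rintro ⟨π, hπ⟩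
    obtain ⟨b, σ, hσ, hbuild⟩ := build_surj hn hπ
    exact ⟨⟨b, σ, hσ⟩, Subtype.ext hbuild⟩

lemma card_step (hn : 1 ≤ n) : Nat.card (A (n+1)) = 2 * Nat.card (A n) := by
  rw [← Nat.card_eq_of_bijective (F n) (F_bijective hn), Nat.card_prod]
  congr 1
  simp [Nat.card_eq_fintype_card]

lemma card_base : Nat.card (A 1) = 1 := by
  have hall : ∀ π : Fin (2*1) → Fin 1, Good π := by
    intro π
    have no3 : ∀ i j k : Fin (2*1), i < j → j < k → False := by
      intro i j k h1 h2
      have hi := i.isLt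
      have hk := k.isLt
      simp only [Fin.lt_def] at h1 h2
      omega
    refine ⟨?_, ?_, ?_, ?_⟩
    · intro v
      have huniv : (Finset.univ.filter fun i => π i = v) = Finset.univ := by
        ext i
        simp [Subsingleton.elim (π i) v]
      rw [huniv]
      simp
    · rintro ⟨i, j, k, l, h1, h2, _⟩
      exact no3 i j k h1 h2
    · rintro ⟨i, j, k, h1, h2, _⟩
      exact no3 i j k h1 h2
    · rintro ⟨i, j, k, h1, h2, _⟩
      exact no3 i j k h1 h2
  show Nat.card {π : Fin (2*1) → Fin 1 // Good π} = 1
  rw [Nat.card_congr (Equiv.subtypeUnivEquiv hall)]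
  simp [Nat.card_eq_fintype_card]

lemma card_A (n : ℕ) (hn : 1 ≤ n) : Nat.card (A n) = 2^(n-1) := by
  induction n, hn using Nat.le_induction with
  | base => exact card_base
  | succ n hn ih =>
    rw [card_step hn, ih, ← pow_succ']
    congr 1
    omega

end Main
end Stmt15

theorem stmt15 (n : ℕ) (hn : 1 ≤ n) :
    Nat.card {π : Fin (2*n) → Fin n //
      IsMultisetPerm π ∧ NonCrossing π ∧ Avoids122 π ∧ Avoids231 π} =
      2^(n-1) :=
  Stmt15.card_A n hn
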